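/- For every real x and every t ≠ 0, the Dunkl–Appell polynomials satisfy the identity Σ_{i=1}^∞ (q_i(x)/γ_μ(i)) (i + 2μθ_i) t^{i−1} = x Q(t) e_μ(xt) + e_μ(−xt) (Λ_μ Q)(t) + Q'(t) (e_μ(xt) − e_μ(−xt)), where θ_i = 0 for even i and θ_i = 1 for odd i. -/

import Mathlib

open scoped BigOperators

/-- The Dunkl coefficients γ_μ(i). -/
noncomputable def gammaMu (μ : ℝ) (i : ℕ) : ℝ :=
  if Even i then
    2 ^ i * (Nat.factorial (i / 2)) *
      Real.Gamma (((i / 2 : ℕ) : ℝ) + μ + 1 / 2) / Real.Gamma (μ + 1 / 2)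
  else
    2 ^ i * (Nat.factorial (i / 2)) *
      Real.Gamma (((i / 2 : ℕ) : ℝ) + μ + 3 / 2) / Real.Gamma (μ + 1 / 2)

/-- θ_i = 0 if i is even, 1 if i is odd. -/
noncomputable def thetaFn (i : ℕ) : ℝ := if Even i then 0 else 1

/-- The Dunkl exponential e_μ(x) = Σ x^i / γ_μ(i). -/
noncomputable def dunklExp (μ : ℝ) (x : ℝ) : ℝ := ∑' i : ℕ, x ^ i / gammaMu μ i

/-- The Dunkl operator (Λ_μ f)(x) = f'(x) + μ (f(x) - f(-x)) / x. -/
noncomputable def dunklOp (μ : ℝ) (f : ℝ → ℝ) (x : ℝ) : ℝ :=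
  deriv f x + μ * (f x - f (-x)) / x

/-- Q(t) = Σ c_i t^i / γ_μ(i). -/
noncomputable def Qf (μ : ℝ) (c : ℕ → ℝ) (t : ℝ) : ℝ := ∑' i : ℕ, c i * t ^ i / gammaMu μ i

/-- The Dunkl–Appell polynomials q_i(x) = Σ_{j=0}^i (γ_μ(i)/(γ_μ(j)γ_μ(i-j))) c_{i-j} x^j. -/
noncomputable def qPoly (μ : ℝ) (c : ℕ → ℝ) (i : ℕ) (x : ℝ) : ℝ :=
  ∑ j ∈ Finset.range (i + 1),
    gammaMu μ i / (gammaMu μ j * gammaMu μ (i - j)) * c (i - j) * x ^ j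

/-- The operators K_n^μ(f;x). -/
noncomputable def Kop (μ : ℝ) (c : ℕ → ℝ) (n : ℕ) (f : ℝ → ℝ) (x : ℝ) : ℝ :=
  1 / (Qf μ c 1 * dunklExp μ (n * x)) *
    ∑' i : ℕ, qPoly μ c i (n * x) / gammaMu μ i * f (((i : ℝ) + 2 * μ * thetaFn i) / n)

noncomputable def Aseq (μ : ℝ) (c : ℕ → ℝ) (t : ℝ) (n : ℕ) : ℝ := c n * t ^ n / gammaMu μ n

noncomputable def Eseq (μ : ℝ) (x t : ℝ) (n : ℕ) : ℝ := x ^ n * t ^ n / gammaMu μ n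

noncomputable def Fseq (μ : ℝ) (x t : ℝ) (n : ℕ) : ℝ :=
  (-1 : ℝ) ^ n * x ^ n * t ^ n / gammaMu μ n

noncomputable def Dseq (μ : ℝ) (c : ℕ → ℝ) (t : ℝ) (n : ℕ) : ℝ :=
  c (n + 1) * ((n : ℝ) + 1) * t ^ n / gammaMu μ (n + 1)

noncomputable def Sseq (μ : ℝ) (c : ℕ → ℝ) (t : ℝ) (n : ℕ) : ℝ :=
  2 * thetaFn (n + 1) * c (n + 1) * t ^ n / gammaMu μ (n + 1)

lemma thetaFn_zero : thetaFn 0 = 0 := by simp [thetaFn]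

lemma thetaFn_add (a b : ℕ) : thetaFn (a + b) = thetaFn a + thetaFn b * (-1 : ℝ) ^ a := by
  unfold thetaFn
  by_cases ha : Even a
  · simp [Nat.even_add, ha, Even.neg_one_pow ha]
  · have hoa : Odd a := Nat.not_even_iff_odd.mp ha
    by_cases hb : Even b <;>
      simp [Nat.even_add, ha, hb, hoa.neg_one_pow]

lemma gammaMu_pos {μ : ℝ} (hμ : μ + 1 / 2 > 0) (i : ℕ) : 0 < gammaMu μ i := by
  have h0 : 0 < Real.Gamma (μ + 1 / 2) := Real.Gamma_pos_of_pos hμ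
  unfold gammaMu
  split <;>
  · apply div_pos _ h0
    apply mul_pos (by positivity)
    apply Real.Gamma_pos_of_pos
    have : (0:ℝ) ≤ ((i / 2 : ℕ) : ℝ) := Nat.cast_nonneg _
    linarith

lemma gammaMu_succ {μ : ℝ} (hμ : μ + 1 / 2 > 0) (i : ℕ) :
    gammaMu μ (i + 1) = (((i : ℝ) + 1) + 2 * μ * thetaFn (i + 1)) * gammaMu μ i := by
  have h0 : Real.Gamma (μ + 1 / 2) ≠ 0 := ne_of_gt (Real.Gamma_pos_of_pos hμ)
  rcases Nat.even_or_odd i with ⟨m, hm⟩ | ⟨m, hm⟩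
  · -- i = 2m, i+1 odd
    subst hm
    have he : Even (m + m) := ⟨m, rfl⟩
    have ho : ¬ Even (m + m + 1) := by simp [Nat.even_add_one, he]
    have hd1 : (m + m) / 2 = m := by omega
    have hd2 : (m + m + 1) / 2 = m := by omega
    have hG : Real.Gamma ((m : ℝ) + μ + 3 / 2) = ((m : ℝ) + μ + 1 / 2) * Real.Gamma ((m : ℝ) + μ + 1 / 2) := by
      have := Real.Gamma_add_one (s := (m : ℝ) + μ + 1 / 2) (by linarith [Nat.cast_nonneg (α := ℝ) m])
      rw [show (m : ℝ) + μ + 3 / 2 = (m : ℝ) + μ + 1 / 2 + 1 by ring, this]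
    simp only [gammaMu, thetaFn, he, ho, if_true, if_false, hd1, hd2]
    rw [hG]
    push_cast
    field_simp
    ring
  · -- i = 2m+1, i+1 even
    subst hm
    have ho : ¬ Even (2 * m + 1) := by simp [Nat.even_add_one]
    have he : Even (2 * m + 1 + 1) := by refine ⟨m + 1, by ring⟩
    have hd1 : (2 * m + 1) / 2 = m := by omega
    have hd2 : (2 * m + 1 + 1) / 2 = m + 1 := by omega
    have harg : ((m : ℝ) + 1) + μ + 1 / 2 = (m : ℝ) + μ + 3 / 2 := by ring
    simp only [gammaMu, thetaFn, he, ho, if_true, if_false, hd1, hd2]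
    push_cast
    rw [harg]
    have hfact : ((m + 1).factorial : ℝ) = (m + 1) * (m.factorial : ℝ) := by
      rw [Nat.factorial_succ]; push_cast; ring
    rw [hfact]
    field_simp
    ring

section
variable {μ : ℝ} (hμ : μ + 1 / 2 > 0)
include hμ

lemma gammaMu_succ_ge {i : ℕ} : (i : ℝ) ≤ ((i : ℝ) + 1) + 2 * μ * thetaFn (i+1) := by
  unfold thetaFn
  split
  · linarith
  · nlinarith [hμ]

lemma summable_abs_pow (y : ℝ) : Summable fun i : ℕ => |y ^ i / gammaMu μ i| := by
  apply summable_of_ratio_norm_eventually_le (r := 2⁻¹) (by norm_num)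
  filter_upwards [Filter.eventually_ge_atTop (⌈2 * |y|⌉₊ + 1)] with n hn
  have hγ := gammaMu_pos hμ n
  have hγ' := gammaMu_pos hμ (n + 1)
  have hrec := gammaMu_succ hμ n
  set a : ℝ := ((n : ℝ) + 1) + 2 * μ * thetaFn (n+1) with ha
  have hna : (n : ℝ) ≤ a := gammaMu_succ_ge hμ
  have h2y : 2 * |y| ≤ (n : ℝ) := by
    have : (⌈2 * |y|⌉₊ : ℝ) ≤ (n : ℝ) := by exact_mod_cast Nat.le_of_succ_le hn
    calc 2 * |y| ≤ (⌈2 * |y|⌉₊ : ℝ) := Nat.le_ceil _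
    _ ≤ (n : ℝ) := this
  have hn1 : (1 : ℝ) ≤ (n : ℝ) := by exact_mod_cast Nat.one_le_iff_ne_zero.mpr (by omega)
  have hapos : 0 < a := by linarith
  rw [Real.norm_eq_abs, Real.norm_eq_abs, abs_abs, abs_abs, abs_div, abs_div,
    abs_of_pos hγ, abs_of_pos hγ', hrec, pow_succ, abs_mul]
  have heq : 2⁻¹ * (|y ^ n| / gammaMu μ n) = (2⁻¹ * |y ^ n| * a) / (a * gammaMu μ n) := by
    field_simp
  rw [heq]
  gcongr ?_ / _
  nlinarith [abs_nonneg (y ^ n), abs_nonneg y]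

lemma uaux_summable (c : ℕ → ℝ) (hQ : ∀ t : ℝ, Summable fun i : ℕ => |c i * t ^ i / gammaMu μ i|)
    (R : ℝ) : Summable fun n : ℕ => |c n * (2 * R) ^ n / gammaMu μ n| / R :=
  (hQ (2 * R)).div_const R

lemma g'_bound (c : ℕ → ℝ) (n : ℕ) (y R : ℝ) (hyR : |y| ≤ R) (hR1 : 1 ≤ R) :
    ‖c n * ((n : ℝ) * y ^ (n - 1)) / gammaMu μ n‖ ≤ |c n * (2 * R) ^ n / gammaMu μ n| / R := by
  have hγ := gammaMu_pos hμ n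
  have hR0 : (0:ℝ) < R := by linarith
  have key : (n : ℝ) * |y ^ (n - 1)| * R ≤ |(2 * R) ^ n| := by
    cases n with
    | zero => simp
    | succ m =>
      have h1 : |y ^ (m + 1 - 1)| ≤ R ^ m := by
        rw [abs_pow]
        simpa using pow_le_pow_left₀ (abs_nonneg y) hyR m
      have h2 : ((m : ℝ) + 1) ≤ 2 ^ (m + 1) := by
        have h := Nat.lt_two_pow_self (n := m + 1)
        have h' : ((m + 1 : ℕ) : ℝ) ≤ ((2 ^ (m + 1) : ℕ) : ℝ) := by exact_mod_cast h.le
        push_cast at h'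
        linarith
      have h3 : |(2 * R) ^ (m + 1)| = 2 ^ (m + 1) * R ^ (m + 1) := by
        rw [abs_pow, abs_of_pos (by linarith), mul_pow]
      rw [h3]
      push_cast
      calc ((m : ℝ) + 1) * |y ^ (m + 1 - 1)| * R ≤ 2 ^ (m + 1) * R ^ m * R := by
            apply mul_le_mul_of_nonneg_right _ hR0.le
            apply mul_le_mul h2 h1 (abs_nonneg _) (by positivity)
      _ = 2 ^ (m + 1) * R ^ (m + 1) := by ring
  rw [Real.norm_eq_abs, abs_div, abs_of_pos hγ, abs_mul, abs_mul,
    abs_of_nonneg (Nat.cast_nonneg n : (0:ℝ) ≤ (n:ℝ)), abs_div, abs_of_pos hγ, abs_mul]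
  rw [div_div, div_le_div_iff₀ hγ (by positivity)]
  have h4 : |c n| * ((n : ℝ) * |y ^ (n - 1)| * R) ≤ |c n| * |(2 * R) ^ n| :=
    mul_le_mul_of_nonneg_left key (abs_nonneg _)
  nlinarith [mul_le_mul_of_nonneg_right h4 hγ.le, abs_nonneg (c n), abs_nonneg (y ^ (n-1)),
    abs_nonneg ((2*R)^n)]

lemma hasDerivAt_Qf (c : ℕ → ℝ) (hQ : ∀ t : ℝ, Summable fun i : ℕ => |c i * t ^ i / gammaMu μ i|)
    (t : ℝ) :
    HasDerivAt (Qf μ c) (∑' n : ℕ, c n * ((n : ℝ) * t ^ (n - 1)) / gammaMu μ n) t := by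
  set R : ℝ := |t| + 1 with hR
  have hR0 : 0 < R := by positivity
  have hR1 : 1 ≤ R := by rw [hR]; linarith [abs_nonneg t]
  set u : ℕ → ℝ := fun n => |c n * (2 * R) ^ n / gammaMu μ n| / R with hu_def
  have hu : Summable u := uaux_summable hμ c hQ R
  have hg' : ∀ (n : ℕ) (y : ℝ), y ∈ Metric.ball (0:ℝ) R →
      ‖c n * ((n : ℝ) * y ^ (n - 1)) / gammaMu μ n‖ ≤ u n := by
    intro n y hy
    have hyR : |y| ≤ R := by
      rw [Metric.mem_ball, dist_zero_right, Real.norm_eq_abs] at hy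
      linarith
    exact g'_bound hμ c n y R hyR hR1
  have hg : ∀ (n : ℕ) (y : ℝ), y ∈ Metric.ball (0:ℝ) R →
      HasDerivAt (fun z => c n * z ^ n / gammaMu μ n)
        (c n * ((n : ℝ) * y ^ (n - 1)) / gammaMu μ n) y := by
    intro n y _
    exact ((hasDerivAt_pow n y).const_mul (c n)).div_const (gammaMu μ n)
  have hg0 : Summable fun n : ℕ => c n * (0:ℝ) ^ n / gammaMu μ n := (hQ 0).of_abs
  have h0mem : (0:ℝ) ∈ Metric.ball (0:ℝ) R := by simp [hR0]
  have htmem : t ∈ Metric.ball (0:ℝ) R := by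
    rw [Metric.mem_ball, dist_zero_right, Real.norm_eq_abs]
    simp [hR]
  exact hasDerivAt_tsum_of_isPreconnected hu Metric.isOpen_ball
    (convex_ball (0:ℝ) R).isPreconnected hg hg' h0mem hg0 htmem

lemma deriv_Qf (c : ℕ → ℝ) (hQ : ∀ t : ℝ, Summable fun i : ℕ => |c i * t ^ i / gammaMu μ i|)
    (t : ℝ) :
    deriv (Qf μ c) t = ∑' n : ℕ, c (n + 1) * ((n : ℝ) + 1) * t ^ n / gammaMu μ (n + 1) := by
  rw [(hasDerivAt_Qf hμ c hQ t).deriv]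
  have hsum : Summable fun n : ℕ => c n * ((n : ℝ) * t ^ (n - 1)) / gammaMu μ n := by
    apply Summable.of_norm_bounded (uaux_summable hμ c hQ (|t| + 1))
    intro n
    exact g'_bound hμ c n t (|t| + 1) (by linarith) (by linarith [abs_nonneg t])
  rw [Summable.tsum_eq_zero_add hsum]
  simp only [Nat.cast_zero, zero_mul, mul_zero, zero_div, zero_add]
  apply tsum_congr
  intro n
  simp only [Nat.add_sub_cancel]
  push_cast
  ring

end

lemma finite_identity {μ : ℝ} (hμ : μ + 1 / 2 > 0) (c : ℕ → ℝ) (x t : ℝ) (n : ℕ) :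
    qPoly μ c (n + 1) x / gammaMu μ (n + 1) * (((n : ℝ) + 1) + 2 * μ * thetaFn (n + 1)) * t ^ n =
      x * (∑ k ∈ Finset.range (n + 1), Aseq μ c t k * Eseq μ x t (n - k)) +
        ((∑ k ∈ Finset.range (n + 1), Dseq μ c t k * Eseq μ x t (n - k)) +
          μ * (∑ k ∈ Finset.range (n + 1), Sseq μ c t k * Fseq μ x t (n - k))) := by
  have hγ : ∀ j, gammaMu μ j ≠ 0 := fun j => (gammaMu_pos hμ j).ne'
  -- Step 0: expand LHS as a single sum
  have step0 : qPoly μ c (n + 1) x / gammaMu μ (n + 1) *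
      (((n : ℝ) + 1) + 2 * μ * thetaFn (n + 1)) * t ^ n =
      ∑ j ∈ Finset.range (n + 2), c (n + 1 - j) * x ^ j / (gammaMu μ j * gammaMu μ (n + 1 - j)) *
        ((((n : ℝ) + 1) + 2 * μ * thetaFn (n + 1)) * t ^ n) := by
    rw [qPoly, Finset.sum_div, Finset.sum_mul, Finset.sum_mul]
    refine Finset.sum_congr rfl fun j hj => ?_
    have h1 := hγ (n + 1)
    have h2 := hγ j
    have h3 := hγ (n + 1 - j)
    field_simp
  rw [step0]
  -- Step 1: split the coefficient pointwise
  have step1 : ∀ j ∈ Finset.range (n + 2),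
      c (n + 1 - j) * x ^ j / (gammaMu μ j * gammaMu μ (n + 1 - j)) *
        ((((n : ℝ) + 1) + 2 * μ * thetaFn (n + 1)) * t ^ n) =
      c (n + 1 - j) * x ^ j / (gammaMu μ j * gammaMu μ (n + 1 - j)) *
        ((((j : ℝ)) + 2 * μ * thetaFn j) * t ^ n) +
      c (n + 1 - j) * x ^ j / (gammaMu μ j * gammaMu μ (n + 1 - j)) *
        (((((n + 1 - j : ℕ) : ℝ)) + 2 * μ * thetaFn (n + 1 - j) * (-1 : ℝ) ^ j) * t ^ n) := by
    intro j hj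
    rw [Finset.mem_range] at hj
    have hj' : j + (n + 1 - j) = n + 1 := by omega
    have hth := thetaFn_add j (n + 1 - j)
    rw [hj'] at hth
    have hcast : ((j : ℝ)) + ((n + 1 - j : ℕ) : ℝ) = (n : ℝ) + 1 := by
      have := congrArg (Nat.cast (R := ℝ)) hj'
      push_cast at this
      linarith
    have hco : (((n : ℝ) + 1) + 2 * μ * thetaFn (n + 1)) =
        (((j : ℝ)) + 2 * μ * thetaFn j) +
          ((((n + 1 - j : ℕ) : ℝ)) + 2 * μ * thetaFn (n + 1 - j) * (-1 : ℝ) ^ j) := by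
      rw [hth]
      linear_combination -hcast
    rw [hco]
    ring
  rw [Finset.sum_congr rfl step1, Finset.sum_add_distrib]
  congr 1
  -- T1 = x * first sum
  · rw [Finset.sum_range_succ']
    have h00 : c (n + 1 - 0) * x ^ 0 / (gammaMu μ 0 * gammaMu μ (n + 1 - 0)) *
        ((((0 : ℕ) : ℝ) + 2 * μ * thetaFn 0) * t ^ n) = 0 := by
      simp [thetaFn_zero]
    rw [h00, add_zero]
    rw [Finset.mul_sum, ← Finset.sum_range_reflect]
    refine Finset.sum_congr rfl fun i hi => ?_
    rw [Finset.mem_range] at hi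
    have e4 : n + 1 - (n - i + 1) = i := by omega
    have e5 : n + 1 - 1 - i = n - i := by omega
    rw [e5, e4]
    have hrec := gammaMu_succ hμ (n - i)
    have hα : (((n - i : ℕ) : ℝ) + 1 + 2 * μ * thetaFn (n - i + 1)) ≠ 0 := by
      intro h
      rw [h, zero_mul] at hrec
      exact hγ _ hrec
    rw [hrec]
    simp only [Aseq, Eseq]
    have htp : t ^ n = t ^ i * t ^ (n - i) := by
      rw [← pow_add]
      congr 1
      omega
    rw [htp]
    push_cast
    set a : ℝ := ((n - i : ℕ) : ℝ) + 1 + 2 * μ * thetaFn (n - i + 1) with ha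
    field_simp [hγ i, hγ (n - i), hα]
    ring
  -- T2 = D * E sum + μ * S * F sum
  · rw [Finset.sum_range_succ]
    have hlast : c (n + 1 - (n + 1)) * x ^ (n + 1) /
        (gammaMu μ (n + 1) * gammaMu μ (n + 1 - (n + 1))) *
        ((((n + 1 - (n + 1) : ℕ) : ℝ) +
          2 * μ * thetaFn (n + 1 - (n + 1)) * (-1 : ℝ) ^ (n + 1)) * t ^ n) = 0 := by
      simp [Nat.sub_self, thetaFn_zero]
    rw [hlast, add_zero]
    rw [Finset.mul_sum, ← Finset.sum_add_distrib, ← Finset.sum_range_reflect]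
    refine Finset.sum_congr rfl fun i hi => ?_
    rw [Finset.mem_range] at hi
    have e5 : n + 1 - 1 - i = n - i := by omega
    have e6 : n + 1 - (n - i) = i + 1 := by omega
    rw [e5, e6]
    simp only [Dseq, Sseq, Eseq, Fseq]
    have htp : t ^ n = t ^ i * t ^ (n - i) := by
      rw [← pow_add]
      congr 1
      omega
    rw [htp]
    push_cast
    field_simp [hγ i, hγ (n - i), hγ (i + 1)]


set_option maxHeartbeats 2000000 in
/-- first derived identity for Dunkl–Appell polynomials. -/
theorem dunklAppell_first_identity (μ : ℝ) (hμ : μ + 1 / 2 > 0) (c : ℕ → ℝ) (hc0 : c 0 ≠ 0)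
    (hQ : ∀ t : ℝ, Summable fun i : ℕ => |c i * t ^ i / gammaMu μ i|)
    (x t : ℝ) (ht : t ≠ 0) :
    ∑' i : ℕ, qPoly μ c (i + 1) x / gammaMu μ (i + 1) *
        (((i : ℝ) + 1) + 2 * μ * thetaFn (i + 1)) * t ^ i =
      x * Qf μ c t * dunklExp μ (x * t) + dunklExp μ (-(x * t)) * dunklOp μ (Qf μ c) t +
        deriv (Qf μ c) t * (dunklExp μ (x * t) - dunklExp μ (-(x * t))) := by
  have hγ : ∀ j, gammaMu μ j ≠ 0 := fun j => (gammaMu_pos hμ j).ne'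
  have ht' : (0 : ℝ) < |t| := abs_pos.mpr ht
  -- norm summability of the five sequences
  have hAn : Summable fun n => ‖Aseq μ c t n‖ := by
    simpa only [Aseq, Real.norm_eq_abs] using hQ t
  have hEn : Summable fun n => ‖Eseq μ x t n‖ := by
    refine (summable_abs_pow hμ (x * t)).congr fun n => ?_
    simp only [Eseq, Real.norm_eq_abs, mul_pow]
  have hFn : Summable fun n => ‖Fseq μ x t n‖ := by
    refine hEn.congr fun n => ?_
    simp only [Eseq, Fseq, Real.norm_eq_abs]
    rw [show (-1 : ℝ) ^ n * x ^ n * t ^ n / gammaMu μ n =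
        (-1 : ℝ) ^ n * (x ^ n * t ^ n / gammaMu μ n) by ring,
      abs_mul, abs_pow, abs_neg, abs_one, one_pow, one_mul]
  have hQ2 : Summable fun n : ℕ => |c (n + 1) * (2 * t) ^ (n + 1) / gammaMu μ (n + 1)| / |t| :=
    (summable_nat_add_iff 1).mpr ((hQ (2 * t)).div_const |t|)
  have hDle : ∀ n : ℕ, ‖Dseq μ c t n‖ ≤
      |c (n + 1) * (2 * t) ^ (n + 1) / gammaMu μ (n + 1)| / |t| := by
    intro n
    have h2 : ((n : ℝ) + 1) ≤ 2 ^ (n + 1) := by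
      have h := Nat.lt_two_pow_self (n := n + 1)
      have h' : ((n + 1 : ℕ) : ℝ) ≤ ((2 ^ (n + 1) : ℕ) : ℝ) := by exact_mod_cast h.le
      push_cast at h'
      linarith
    have hDeq : Dseq μ c t n = c (n + 1) * (2 * t) ^ (n + 1) / gammaMu μ (n + 1) *
        (((n : ℝ) + 1) / (2 ^ (n + 1) * t)) := by
      simp only [Dseq]
      rw [mul_pow]
      field_simp [hγ (n + 1), ht]
      ring
    rw [hDeq, norm_mul, Real.norm_eq_abs, Real.norm_eq_abs]
    have hb : |((n : ℝ) + 1) / (2 ^ (n + 1) * t)| ≤ 1 / |t| := by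
      rw [abs_div, abs_mul, abs_pow, abs_two,
        abs_of_nonneg (show (0 : ℝ) ≤ (n : ℝ) + 1 by positivity)]
      rw [div_le_div_iff₀ (by positivity) ht']
      have := mul_le_mul_of_nonneg_right h2 (abs_nonneg t)
      nlinarith
    calc |c (n + 1) * (2 * t) ^ (n + 1) / gammaMu μ (n + 1)| * |((n : ℝ) + 1) / (2 ^ (n + 1) * t)|
        ≤ |c (n + 1) * (2 * t) ^ (n + 1) / gammaMu μ (n + 1)| * (1 / |t|) :=
          mul_le_mul_of_nonneg_left hb (abs_nonneg _)
      _ = |c (n + 1) * (2 * t) ^ (n + 1) / gammaMu μ (n + 1)| / |t| := by ring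
  have hDn : Summable fun n => ‖Dseq μ c t n‖ :=
    Summable.of_nonneg_of_le (fun n => norm_nonneg _) hDle hQ2
  have hQ1 : Summable fun n : ℕ => |c (n + 1) * t ^ (n + 1) / gammaMu μ (n + 1)| * (2 / |t|) :=
    ((summable_nat_add_iff 1).mpr (hQ t)).mul_right _
  have hSle : ∀ n : ℕ, ‖Sseq μ c t n‖ ≤
      |c (n + 1) * t ^ (n + 1) / gammaMu μ (n + 1)| * (2 / |t|) := by
    intro n
    have hSeq : Sseq μ c t n = c (n + 1) * t ^ (n + 1) / gammaMu μ (n + 1) *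
        (2 * thetaFn (n + 1) / t) := by
      simp only [Sseq]
      field_simp [hγ (n + 1), ht]
      ring
    rw [hSeq, norm_mul, Real.norm_eq_abs, Real.norm_eq_abs]
    apply mul_le_mul_of_nonneg_left _ (abs_nonneg _)
    have hθ : |thetaFn (n + 1)| ≤ 1 := by
      unfold thetaFn
      split <;> norm_num
    rw [abs_div, abs_mul, abs_two]
    have h2t : 2 * |thetaFn (n + 1)| <= 2 := by nlinarith [hθ]
    exact div_le_div_of_nonneg_right h2t ht'.le
  have hSn : Summable fun n => ‖Sseq μ c t n‖ :=
    Summable.of_nonneg_of_le (fun n => norm_nonneg _) hSle hQ1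
  -- basic tsum identities
  have hexp1 : dunklExp μ (x * t) = ∑' n, Eseq μ x t n := by
    unfold dunklExp
    exact tsum_congr fun n => by simp [Eseq, mul_pow]
  have hexp2 : dunklExp μ (-(x * t)) = ∑' n, Fseq μ x t n := by
    unfold dunklExp
    refine tsum_congr fun n => ?_
    simp only [Fseq]
    rw [show -(x * t) = (-1) * (x * t) by ring, mul_pow, mul_pow]
    ring
  have hQt : Qf μ c t = ∑' n, Aseq μ c t n := rfl
  have hderiv : deriv (Qf μ c) t = ∑' n, Dseq μ c t n := by
    rw [deriv_Qf hμ c hQ t]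
    exact tsum_congr fun n => by simp [Dseq]
  have hodd : Qf μ c t - Qf μ c (-t) = t * ∑' n, Sseq μ c t n := by
    have hsA : Summable fun n : ℕ => c n * t ^ n / gammaMu μ n := (hQ t).of_abs
    have hsA' : Summable fun n : ℕ => c n * (-t) ^ n / gammaMu μ n := (hQ (-t)).of_abs
    rw [Qf, Qf, ← Summable.tsum_sub hsA hsA']
    have hsub : Summable fun n : ℕ =>
        c n * t ^ n / gammaMu μ n - c n * (-t) ^ n / gammaMu μ n := hsA.sub hsA'
    rw [Summable.tsum_eq_zero_add hsub]
    simp only [pow_zero, mul_one, sub_self, zero_add]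
    rw [← tsum_mul_left]
    refine tsum_congr fun n => ?_
    rcases Nat.even_or_odd (n + 1) with he | ho
    · rw [he.neg_pow]
      simp [Sseq, thetaFn, he]
    · rw [ho.neg_pow]
      have hθ : thetaFn (n + 1) = 1 := by
        simp [thetaFn, Nat.not_even_iff_odd.mpr ho]
      simp only [Sseq, hθ]
      field_simp [hγ (n + 1)]
      ring
  -- summability of the Cauchy products
  have hP1 : Summable fun n => ∑ k ∈ Finset.range (n + 1), Aseq μ c t k * Eseq μ x t (n - k) :=
    (summable_norm_sum_mul_range_of_summable_norm hAn hEn).of_norm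
  have hP2 : Summable fun n => ∑ k ∈ Finset.range (n + 1), Dseq μ c t k * Eseq μ x t (n - k) :=
    (summable_norm_sum_mul_range_of_summable_norm hDn hEn).of_norm
  have hP3 : Summable fun n => ∑ k ∈ Finset.range (n + 1), Sseq μ c t k * Fseq μ x t (n - k) :=
    (summable_norm_sum_mul_range_of_summable_norm hSn hFn).of_norm
  have key : (∑' i : ℕ, qPoly μ c (i + 1) x / gammaMu μ (i + 1) *
        (((i : ℝ) + 1) + 2 * μ * thetaFn (i + 1)) * t ^ i) =
      x * ((∑' n, Aseq μ c t n) * ∑' n, Eseq μ x t n) +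
        ((∑' n, Dseq μ c t n) * ∑' n, Eseq μ x t n +
          μ * ((∑' n, Sseq μ c t n) * ∑' n, Fseq μ x t n)) := by
    rw [tsum_mul_tsum_eq_tsum_sum_range_of_summable_norm hAn hEn,
      tsum_mul_tsum_eq_tsum_sum_range_of_summable_norm hDn hEn,
      tsum_mul_tsum_eq_tsum_sum_range_of_summable_norm hSn hFn,
      ← tsum_mul_left, ← tsum_mul_left,
      ← Summable.tsum_add hP2 (hP3.mul_left μ),
      ← Summable.tsum_add (hP1.mul_left x) (hP2.add (hP3.mul_left μ))]
    exact tsum_congr fun n => finite_identity hμ c x t n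
  rw [hexp1, hexp2, dunklOp, hderiv, hodd, hQt]
  rw [mul_div_assoc, mul_div_cancel_left₀ _ ht]
  rw [key]
  ring
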